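/- arXiv:2012.11034 — 3 statements merged into one kernel-verified Lean document; each statement's English description precedes it below -/
import Mathlib

section
/- Let T be a pretriangulated category. Suppose given two distinguished triangles (A, B, C, u, v, w) and (A', B', C', u', v', w') and morphisms f : A → A', g : B → B' with u' ∘ f = g ∘ u. If the homomorphism of abelian groups Hom(A[1], C') → Hom(C, C') given by precomposition with w : C → A[1] is the zero map, then there exists a unique morphism h : C → C' satisfying h ∘ v = v' ∘ g, and this h moreover satisfies w' ∘ h = f[1] ∘ w, so that (f, g, h) is a morphism of distinguished triangles. -/
open CategoryTheory CategoryTheory.Pretriangulated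

/-- Let `T` be a pretriangulated category. Given two distinguished
triangles `(A, B, C, u, v, w)` and `(A', B', C', u', v', w')` and morphisms
`f : A ⟶ A'`, `g : B ⟶ B'` with `u' ∘ f = g ∘ u`, if precomposition with
`w : C ⟶ A⟦1⟧` is the zero map `Hom(A⟦1⟧, C') → Hom(C, C')`, then there is a
unique `h : C ⟶ C'` with `h ∘ v = v' ∘ g`, and this `h` moreover satisfies
`w' ∘ h = f⟦1⟧ ∘ w`, so that `(f, g, h)` is a morphism of distinguished triangles. -/
theorem stmt0 {T : Type*} [Category T] [Limits.HasZeroObject T] [HasShift T ℤ]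
    [Preadditive T] [∀ n : ℤ, (shiftFunctor T n).Additive] [Pretriangulated T]
    {A B C A' B' C' : T}
    (u : A ⟶ B) (v : B ⟶ C) (w : C ⟶ A⟦(1 : ℤ)⟧)
    (u' : A' ⟶ B') (v' : B' ⟶ C') (w' : C' ⟶ A'⟦(1 : ℤ)⟧)
    (hT : Triangle.mk u v w ∈ distTriang T)
    (hT' : Triangle.mk u' v' w' ∈ distTriang T)
    (f : A ⟶ A') (g : B ⟶ B') (hfg : f ≫ u' = u ≫ g)
    (hzero : ∀ φ : A⟦(1 : ℤ)⟧ ⟶ C', w ≫ φ = 0) :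
    ∃ h : C ⟶ C',
      (v ≫ h = g ≫ v' ∧ h ≫ w' = w ≫ f⟦(1 : ℤ)⟧') ∧
      ∀ h' : C ⟶ C', v ≫ h' = g ≫ v' → h' = h := by
  obtain ⟨h, h₁, h₂⟩ := complete_distinguished_triangle_morphism _ _ hT hT' f g hfg.symm
  change C ⟶ C' at h
  change v ≫ h = g ≫ v' at h₁
  change w ≫ f⟦(1 : ℤ)⟧' = h ≫ w' at h₂
  refine ⟨h, ⟨h₁, h₂.symm⟩, fun h' hh' => ?_⟩
  have : v ≫ (h' - h) = 0 := by simp [Preadditive.comp_sub, hh', h₁]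
  obtain ⟨φ, hφ⟩ := Triangle.yoneda_exact₃ _ hT (h' - h) this
  change h' - h = w ≫ φ at hφ
  rw [hzero φ] at hφ
  rwa [sub_eq_zero] at hφ
end

section
/- Let T be a pretriangulated category and u : A → B a morphism. Suppose (A, B, C, u, v, w) and (A, B, C', u, v', w') are two distinguished triangles completing u, and suppose that the homomorphism Hom(A[1], C') → Hom(C, C') given by precomposition with w is the zero map. Then there exists a unique isomorphism h : C → C' such that h ∘ v = v' and w' ∘ h = w. -/
open CategoryTheory CategoryTheory.Pretriangulated

/-- In a pretriangulated category, if `(A, B, C, u, v, w)` and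
`(A, B, C', u, v', w')` are two distinguished triangles completing the same
morphism `u : A ⟶ B`, and precomposition with `w` gives the zero map
`Hom(A⟦1⟧, C') → Hom(C, C')`, then there is a unique isomorphism `h : C ≅ C'`
with `h ∘ v = v'` and `w' ∘ h = w`. -/
theorem stmt1 {T : Type*} [Category T] [Limits.HasZeroObject T] [HasShift T ℤ]
    [Preadditive T] [∀ n : ℤ, (shiftFunctor T n).Additive] [Pretriangulated T]
    {A B C C' : T}
    (u : A ⟶ B) (v : B ⟶ C) (w : C ⟶ A⟦(1 : ℤ)⟧)
    (v' : B ⟶ C') (w' : C' ⟶ A⟦(1 : ℤ)⟧)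
    (hT : Triangle.mk u v w ∈ distTriang T)
    (hT' : Triangle.mk u v' w' ∈ distTriang T)
    (hzero : ∀ φ : A⟦(1 : ℤ)⟧ ⟶ C', w ≫ φ = 0) :
    ∃! h : C ≅ C', v ≫ h.hom = v' ∧ h.hom ≫ w' = w := by
  obtain ⟨h, h₁, h₂⟩ : ∃ h : C ⟶ C', v ≫ h = 𝟙 B ≫ v' ∧
      w ≫ (shiftFunctor T (1 : ℤ)).map (𝟙 A) = h ≫ w' := complete_distinguished_triangle_morphism _ _ hT hT'
    (𝟙 A) (𝟙 B) (by exact (Category.comp_id u).trans (Category.id_comp u).symm)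
  simp only [Category.id_comp] at h₁
  simp at h₂
  have : IsIso h := by
    have := isIso₃_of_isIso₁₂
      ({ hom₁ := 𝟙 A, hom₂ := 𝟙 B, hom₃ := h,
         comm₁ := (Category.comp_id u).trans (Category.id_comp u).symm,
         comm₂ := h₁.trans (Category.id_comp v').symm,
         comm₃ := (congrArg (w ≫ ·) ((shiftFunctor T (1 : ℤ)).map_id A)).trans
           ((Category.comp_id w).trans h₂) } :
        Triangle.mk u v w ⟶ Triangle.mk u v' w') hT hT'
      (by exact (inferInstance : IsIso (𝟙 A))) (by exact (inferInstance : IsIso (𝟙 B)))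
    exact this
  refine ⟨asIso h, ⟨h₁, h₂.symm⟩, ?_⟩
  rintro h' ⟨h'₁, h'₂⟩
  ext
  have hv : v ≫ (h'.hom - h) = 0 := by simp [h'₁, h₁]
  obtain ⟨g, hg⟩ := Triangle.yoneda_exact₃ _ hT (h'.hom - h) hv
  have : h'.hom - h = 0 := by rw [hg]; exact hzero g
  exact sub_eq_zero.mp this
end

section
/- Let A be a cochain complex of abelian groups such that each cohomology group H^i(A) is a finite-dimensional ℚ-vector space (equivalently, a uniquely divisible abelian group of finite rank), and let C be a cochain complex of abelian groups such that each H^i(C) is a finitely generated abelian group. Then the abelian group Hom_{D(ℤ)}(A, C) is divisible. -/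
open CategoryTheory

/-- In `AddCommGrpCat`, if `X` carries a `ℚ`-module structure, then `n • 𝟙 X` is an
isomorphism for `n > 0`. -/
lemma aux_isIso_nsmul_id (X : AddCommGrpCat) (m : Module ℚ X) (n : ℕ) (hn : 0 < n) :
    IsIso ((n : ℕ) • 𝟙 X) := by
  refine ⟨⟨AddCommGrpCat.ofHom ((((n : ℚ)⁻¹) • (LinearMap.id (R := ℚ) (M := X))).toAddMonoidHom), ?_, ?_⟩⟩
  · ext x
    simp only [AddCommGrpCat.coe_comp, Function.comp_apply]
    show ((n : ℚ)⁻¹ • (n • x : X)) = x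
    rw [← Nat.cast_smul_eq_nsmul ℚ n x, smul_smul,
      inv_mul_cancel₀ (by exact_mod_cast hn.ne' : (n : ℚ) ≠ 0), one_smul]
  · ext x
    simp only [AddCommGrpCat.coe_comp, Function.comp_apply]
    show (n • ((n : ℚ)⁻¹ • x : X)) = x
    rw [← Nat.cast_smul_eq_nsmul ℚ n, smul_smul,
      mul_inv_cancel₀ (by exact_mod_cast hn.ne' : (n : ℚ) ≠ 0), one_smul]

/-- Let `A` be a cochain complex of abelian groups whose cohomology
groups are finite-dimensional `ℚ`-vector spaces (i.e. each `H^i(A)` carries a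
`ℚ`-module structure, necessarily unique, for which it is finite-dimensional),
and let `C` be a cochain complex of abelian groups with finitely generated
cohomology groups. Then the abelian group `Hom_{D(ℤ)}(A, C)` is divisible. -/
theorem stmt5 [HasDerivedCategory AddCommGrpCat]
    (A C : CochainComplex AddCommGrpCat ℤ)
    (hA : ∀ i : ℤ, ∃ m : Module ℚ (A.homology i),
      @Module.Finite ℚ (A.homology i) _ _ m)
    (hC : ∀ i : ℤ, AddGroup.FG (C.homology i)) :
    ∀ d : (DerivedCategory.Q.obj A ⟶ DerivedCategory.Q.obj C),
      ∀ n : ℕ, 0 < n → ∃ e : (DerivedCategory.Q.obj A ⟶ DerivedCategory.Q.obj C),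
        n • e = d := by
  intro d n hn
  -- multiplication by n on A is a quasi-isomorphism
  have hq : QuasiIso ((n : ℕ) • 𝟙 A) := by
    rw [quasiIso_iff]
    intro i
    rw [quasiIsoAt_iff_isIso_homologyMap]
    have : HomologicalComplex.homologyMap ((n : ℕ) • 𝟙 A) i
        = (n : ℕ) • 𝟙 (A.homology i) := by
      rw [show HomologicalComplex.homologyMap ((n : ℕ) • 𝟙 A) i
          = (HomologicalComplex.homologyFunctor AddCommGrpCat (ComplexShape.up ℤ) i).map
            ((n : ℕ) • 𝟙 A) from rfl,
        Functor.map_nsmul, CategoryTheory.Functor.map_id]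
      rfl
    rw [this]
    obtain ⟨m, _⟩ := hA i
    exact aux_isIso_nsmul_id _ m n hn
  have : IsIso (DerivedCategory.Q.map ((n : ℕ) • 𝟙 A)) := inferInstance
  refine ⟨inv (DerivedCategory.Q.map ((n : ℕ) • 𝟙 A)) ≫ d, ?_⟩
  have h1 : DerivedCategory.Q.map ((n : ℕ) • 𝟙 A) = n • 𝟙 (DerivedCategory.Q.obj A) := by
    rw [Functor.map_nsmul, CategoryTheory.Functor.map_id]
  calc n • (inv (DerivedCategory.Q.map ((n : ℕ) • 𝟙 A)) ≫ d)
      = (n • 𝟙 (DerivedCategory.Q.obj A)) ≫ inv (DerivedCategory.Q.map ((n : ℕ) • 𝟙 A)) ≫ d := by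
        rw [Preadditive.nsmul_comp]; simp
    _ = d := by rw [← h1, IsIso.hom_inv_id_assoc]
end
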